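/- Let K be a field and let f(X,Y) = a_0(X) + a_1(X)Y + ... + a_m(X)Y^m with a_0·a_m ≠ 0. Let |·| be the nonarchimedean absolute value on K(X) given by |F| = ρ^{-deg F} (0 < ρ < 1), extended to an algebraic closure of K(X). If θ is a root (in the algebraic closure of K(X)) of f(X, g(X,Y)) viewed as a polynomial in Y, where g ∈ K[X][Y], then setting h(X,Y) = a_0 + a_1 g + ... + a_{m-1} g^{m-1}, one has |h(X,θ)| ≤ max over 1 ≤ v ≤ m, 0 ≤ k ≤ m-1 of |a_k| · (|a_{m-v}|/|a_m|)^{k/v}. -/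

import Mathlib

open Polynomial

theorem stmt18 {K : Type*} [Field K] (ρ : ℝ) (hρ0 : 0 < ρ) (hρ1 : ρ < 1)
    (v : AlgebraicClosure (RatFunc K) → ℝ)
    (hvnn : ∀ x, 0 ≤ v x)
    (hv0 : ∀ x, v x = 0 ↔ x = 0)
    (hvmul : ∀ x y, v (x * y) = v x * v y)
    (hvna : ∀ x y, v (x + y) ≤ max (v x) (v y))
    -- v extends the degree absolute value |F| = ρ^{-deg F} on K(X)
    (hvext : ∀ F : Polynomial K, F ≠ 0 →
      v (algebraMap (RatFunc K) (AlgebraicClosure (RatFunc K))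
          (algebraMap (Polynomial K) (RatFunc K) F)) = ρ ^ (-(F.natDegree : ℤ)))
    (m : ℕ) (hm : 1 ≤ m) (a : ℕ → Polynomial K) (ha0 : a 0 ≠ 0) (ham : a m ≠ 0)
    (f g : Polynomial (Polynomial K))
    (hf : f = ∑ i ∈ Finset.range (m + 1), Polynomial.C (a i) * Polynomial.X ^ i)
    (θ : AlgebraicClosure (RatFunc K))
    (hroot : Polynomial.eval₂
        ((algebraMap (RatFunc K) (AlgebraicClosure (RatFunc K))).comp
          (algebraMap (Polynomial K) (RatFunc K))) θ (Polynomial.aeval g f) = 0) :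
    v (Polynomial.eval₂
        ((algebraMap (RatFunc K) (AlgebraicClosure (RatFunc K))).comp
          (algebraMap (Polynomial K) (RatFunc K))) θ
        (∑ i ∈ Finset.range m, Polynomial.C (a i) * g ^ i))
      ≤ ((Finset.Icc 1 m) ×ˢ Finset.range m).sup'
          (Finset.Nonempty.product (Finset.nonempty_Icc.mpr hm)
            (Finset.nonempty_range_iff.mpr (by omega)))
          (fun p =>
            v (algebraMap (RatFunc K) (AlgebraicClosure (RatFunc K))
                (algebraMap (Polynomial K) (RatFunc K) (a p.2)))
              * (v (algebraMap (RatFunc K) (AlgebraicClosure (RatFunc K))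
                    (algebraMap (Polynomial K) (RatFunc K) (a (m - p.1))))
                  / v (algebraMap (RatFunc K) (AlgebraicClosure (RatFunc K))
                      (algebraMap (Polynomial K) (RatFunc K) (a m))))
                ^ ((p.2 : ℝ) / (p.1 : ℝ))) := by
  set φ := ((algebraMap (RatFunc K) (AlgebraicClosure (RatFunc K))).comp
      (algebraMap (Polynomial K) (RatFunc K))) with hφ
  set vA : ℕ → ℝ := fun i => v (algebraMap (RatFunc K) (AlgebraicClosure (RatFunc K))
      (algebraMap (Polynomial K) (RatFunc K) (a i))) with hvA
  have hφA : ∀ i, v (φ (a i)) = vA i := fun i => rfl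
  -- basic facts about v
  have hv_zero : v 0 = 0 := (hv0 0).mpr rfl
  have hv_one : v 1 = 1 := by
    have h := hvmul 1 1
    rw [mul_one] at h
    have h1 : v 1 ≠ 0 := fun h0 => one_ne_zero ((hv0 1).mp h0)
    have h2 : v 1 * 1 = v 1 * v 1 := by rw [mul_one]; exact h
    exact (mul_left_cancel₀ h1 h2).symm
  have hv_neg : ∀ x, v (-x) = v x := by
    intro x
    have h1 : v (-1 : AlgebraicClosure (RatFunc K)) = 1 := by
      have h := hvmul (-1) (-1)
      rw [neg_mul_neg, one_mul, hv_one] at h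
      have hn : (0:ℝ) ≤ v (-1 : AlgebraicClosure (RatFunc K)) := hvnn _
      nlinarith [h, hn]
    have hx : (-x : AlgebraicClosure (RatFunc K)) = (-1) * x := by ring
    rw [hx, hvmul, h1, one_mul]
  have hv_pow : ∀ (x : AlgebraicClosure (RatFunc K)) (n : ℕ), v (x ^ n) = v x ^ n := by
    intro x n
    induction n with
    | zero => simpa using hv_one
    | succ n ih => rw [pow_succ, hvmul, ih, pow_succ]
  have hsum : ∀ (s : Finset ℕ) (F : ℕ → AlgebraicClosure (RatFunc K)) (B : ℝ), 0 ≤ B →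
      (∀ i ∈ s, v (F i) ≤ B) → v (∑ i ∈ s, F i) ≤ B := by
    intro s
    induction s using Finset.induction with
    | empty => intro F B hB _; simpa [hv_zero] using hB
    | @insert a s hnot ih =>
      intro F B hB h
      rw [Finset.sum_insert hnot]
      exact le_trans (hvna _ _) (max_le (h _ (Finset.mem_insert_self _ _))
        (ih F B hB fun i hi => h i (Finset.mem_insert_of_mem hi)))
  -- positivity of vA 0, vA m
  have hA0 : 0 < vA 0 := by
    rw [hvA]; simp only []
    rw [hvext (a 0) ha0]; exact zpow_pos hρ0 _
  have hAm : 0 < vA m := by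
    rw [hvA]; simp only []
    rw [hvext (a m) ham]; exact zpow_pos hρ0 _
  set γ := Polynomial.eval₂ φ θ g with hγdef
  set t := v γ with htdef
  have hroot' : ∑ i ∈ Finset.range (m + 1), φ (a i) * γ ^ i = 0 := by
    rw [hf] at hroot
    simpa [map_sum, map_mul, map_pow, aeval_C, Polynomial.algebraMap_eq,
      eval₂_finset_sum, eval₂_mul, eval₂_pow, eval₂_C] using hroot
  have hLHS : Polynomial.eval₂ φ θ (∑ i ∈ Finset.range m, Polynomial.C (a i) * g ^ i)
      = ∑ i ∈ Finset.range m, φ (a i) * γ ^ i := by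
    simp [eval₂_finset_sum, eval₂_mul, eval₂_pow, eval₂_C]
    rfl
  -- γ ≠ 0
  have hγ0 : γ ≠ 0 := by
    intro h0
    rw [h0] at hroot'
    simp [Finset.sum_range_succ', zero_pow] at hroot'
    have : vA 0 = 0 := by rw [← hφA, hroot', hv_zero]
    linarith
  have ht : 0 < t := by
    rcases lt_or_eq_of_le (hvnn γ) with h | h
    · exact h
    · exact absurd ((hv0 γ).mp h.symm) hγ0
  -- existence of good j
  have hkey : ∃ j ∈ Finset.Icc 1 m, vA m * t ^ j ≤ vA (m - j) := by
    by_contra hcon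
    push_neg at hcon
    have key : ∀ i ∈ Finset.range m, vA i * t ^ i < vA m * t ^ m := by
      intro i hi
      have hiM : i < m := Finset.mem_range.mp hi
      have hj : m - i ∈ Finset.Icc 1 m := Finset.mem_Icc.mpr ⟨by omega, by omega⟩
      have h := hcon (m - i) hj
      rw [show m - (m - i) = i by omega] at h
      have h2 : vA i * t ^ i < (vA m * t ^ (m - i)) * t ^ i :=
        mul_lt_mul_of_pos_right h (pow_pos ht i)
      calc vA i * t ^ i < (vA m * t ^ (m - i)) * t ^ i := h2
        _ = vA m * t ^ m := by rw [mul_assoc, ← pow_add, show m - i + i = m by omega]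
    have hne : (Finset.range m).Nonempty := Finset.nonempty_range_iff.mpr (by omega)
    set B := (Finset.range m).sup' hne (fun i => vA i * t ^ i) with hB
    have hB0 : 0 ≤ B := le_trans (by positivity)
      (Finset.le_sup' (fun i => vA i * t ^ i) (Finset.mem_range.mpr (by omega) : 0 ∈ Finset.range m))
    have heq : φ (a m) * γ ^ m = -∑ i ∈ Finset.range m, φ (a i) * γ ^ i := by
      rw [Finset.sum_range_succ] at hroot'
      linear_combination hroot'
    have hle : vA m * t ^ m ≤ B := by
      rw [← hφA, ← hv_pow, ← hvmul, heq, hv_neg]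
      exact hsum _ _ B hB0 (fun i hi => by
        rw [hvmul, hv_pow, hφA]
        exact Finset.le_sup' (fun i => vA i * t ^ i) hi)
    have hlt : B < vA m * t ^ m := (Finset.sup'_lt_iff hne).mpr key
    linarith
  obtain ⟨j, hjmem, hj⟩ := hkey
  obtain ⟨hj1, hjm⟩ := Finset.mem_Icc.mp hjmem
  have hjR : (0:ℝ) < (j:ℝ) := by exact_mod_cast by omega
  set ratio := vA (m - j) / vA m with hratiodef
  have hratio : 0 ≤ ratio := div_nonneg (hvnn _) (hvnn _)
  have ht_pow : t ^ j ≤ ratio := by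
    rw [hratiodef, le_div_iff₀ hAm]
    linarith [hj]
  set r := ratio ^ ((1:ℝ)/(j:ℝ)) with hrdef
  have htr : t ≤ r := by
    have hteq : t = ((t ^ j : ℝ)) ^ ((1:ℝ)/(j:ℝ)) := by
      rw [← Real.rpow_natCast t j, ← Real.rpow_mul ht.le]
      rw [mul_one_div, div_self (ne_of_gt hjR), Real.rpow_one]
    rw [hteq, hrdef]
    exact Real.rpow_le_rpow (pow_nonneg ht.le j) ht_pow (by positivity)
  have hr0 : 0 ≤ r := Real.rpow_nonneg hratio _
  have hrk : ∀ k : ℕ, r ^ k = ratio ^ ((k:ℝ)/(j:ℝ)) := by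
    intro k
    rw [show ((k:ℝ)/(j:ℝ)) = (1/(j:ℝ)) * (k:ℝ) by ring, Real.rpow_mul hratio,
      Real.rpow_natCast]
  -- final bound
  rw [hLHS]
  refine hsum _ _ _ ?_ ?_
  · refine le_trans ?_ (Finset.le_sup' _ (show ((1:ℕ),(0:ℕ)) ∈ _ from
      Finset.mem_product.mpr ⟨Finset.mem_Icc.mpr ⟨le_refl 1, hm⟩,
        Finset.mem_range.mpr (by omega)⟩))
    exact mul_nonneg (hvnn _) (Real.rpow_nonneg (div_nonneg (hvnn _) (hvnn _)) _)
  · intro k hk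
    have hvk : v (φ (a k) * γ ^ k) = vA k * t ^ k := by rw [hvmul, hv_pow, hφA]
    rw [hvk]
    refine le_trans ?_ (Finset.le_sup' _ (show (j, k) ∈ _ from
      Finset.mem_product.mpr ⟨hjmem, hk⟩))
    show vA k * t ^ k ≤ vA k * ratio ^ ((k:ℝ)/(j:ℝ))
    rw [← hrk]
    exact mul_le_mul_of_nonneg_left (pow_le_pow_left₀ ht.le htr k) (hvnn _)
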